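/- Let μ, ν : 𝔻 → ℝ be Borel measurable, let z₀, w₀ ∈ 𝔻 and R > 0. Then d^R_{μ,ν}(z₀, w₀) = d^R_{ν,μ}(w₀, z₀) (symmetry of the local distance). -/

import Mathlib

open Complex MeasureTheory ENNReal

noncomputable section

/-- The open unit disk in `ℂ`. -/
def unitDisk : Set ℂ := {z : ℂ | ‖z‖ < 1}

/-- A disk Möbius transformation: `z ↦ τ (z - a)/(1 - conj a · z)` with `a ∈ 𝔻`, `|τ| = 1`. -/
def IsDiskMobius (m : ℂ → ℂ) : Prop :=
  ∃ a τ : ℂ, ‖a‖ < 1 ∧ ‖τ‖ = 1 ∧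
    ∀ z : ℂ, m z = τ * (z - a) / (1 - (starRingEnd ℂ) a * z)

/-- The hyperbolic disk `Ω_{z₀,R}` of radius `R` centered at `z₀`. -/
def hypDisk (z₀ : ℂ) (R : ℝ) : Set ℂ :=
  {z : ℂ | ‖z‖ < 1 ∧
    ‖(z - z₀) / (1 - (starRingEnd ℂ) z₀ * z)‖ < Real.tanh R}

/-- The hyperbolic area measure `dvol_H = (1 - |z|²)⁻² dλ` on `ℂ`. -/
def volH : Measure ℂ :=
  volume.withDensity (fun z => ENNReal.ofReal (((1 - ‖z‖ ^ 2) ^ 2)⁻¹))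

/-- The local dissimilarity distance `d^R_{μ,ν}(z₀,w₀)`, valued in `[0,∞]`. -/
def dR (R : ℝ) (μ ν : ℂ → ℝ) (z₀ w₀ : ℂ) : ℝ≥0∞ :=
  ⨅ m : {m : ℂ → ℂ // IsDiskMobius m ∧ m z₀ = w₀},
    ∫⁻ z in hypDisk z₀ R, ENNReal.ofReal |μ z - ν (m.1 z)| ∂volH

/-- The measure on `𝔻` with density `μ` w.r.t. the hyperbolic measure. -/
def muH (μ : ℂ → ℝ) : Measure ℂ :=
  (volH.restrict unitDisk).withDensity (fun z => ENNReal.ofReal (μ z))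

/-- The generalized Kantorovich transportation cost `T^R_d(μ,ν)`. -/
def TRd (R : ℝ) (μ ν : ℂ → ℝ) : ℝ≥0∞ :=
  ⨅ π : {π : Measure (ℂ × ℂ) //
      π.map Prod.fst = muH μ ∧ π.map Prod.snd = muH ν},
    ∫⁻ p, dR R μ ν p.1 p.2 ∂π.1

def aOf (z₀ w₀ σ : ℂ) : ℂ :=
  (z₀ - w₀ * (starRingEnd ℂ) σ) / (1 - (starRingEnd ℂ) z₀ * w₀ * (starRingEnd ℂ) σ)

def tauOf (z₀ w₀ σ : ℂ) : ℂ :=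
  σ * (1 - (starRingEnd ℂ) z₀ * w₀ * (starRingEnd ℂ) σ) / (1 - z₀ * (starRingEnd ℂ) w₀ * σ)

/-- The Möbius transformation `m_{z₀,w₀,σ}`. -/
def stdMobius (z₀ w₀ σ : ℂ) (z : ℂ) : ℂ :=
  tauOf z₀ w₀ σ * (z - aOf z₀ w₀ σ) / (1 - (starRingEnd ℂ) (aOf z₀ w₀ σ) * z)

/-- `Φ(z₀,w₀,σ)`. -/
def Phi (R : ℝ) (μ ν : ℂ → ℝ) (z₀ w₀ σ : ℂ) : ℝ≥0∞ :=
  ∫⁻ z in hypDisk z₀ R, ENNReal.ofReal |μ z - ν (stdMobius z₀ w₀ σ z)| ∂volH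




/-! ### Auxiliary lemmas for `dR_symm` -/

/-- The standard disk Möbius transformation with parameters `a`, `τ`. -/
def mob (a τ : ℂ) (z : ℂ) : ℂ := τ * (z - a) / (1 - (starRingEnd ℂ) a * z)

lemma den_ne {a : ℂ} (ha : ‖a‖ < 1) {z : ℂ} (hz : ‖z‖ < 1) :
    1 - (starRingEnd ℂ) a * z ≠ 0 := by
  intro h
  have h1 : (starRingEnd ℂ) a * z = 1 := by linear_combination -h
  have h2 : ‖(starRingEnd ℂ) a * z‖ = 1 := by rw [h1]; simp
  rw [norm_mul, Complex.norm_conj] at h2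
  nlinarith [norm_nonneg a, norm_nonneg z]

lemma normSq_mob {a τ : ℂ} (ha : ‖a‖ < 1) (hτ : ‖τ‖ = 1) {z : ℂ}
    (hz : ‖z‖ < 1) :
    (1 - normSq (mob a τ z)) * normSq (1 - (starRingEnd ℂ) a * z)
      = (1 - normSq a) * (1 - normSq z) := by
  have hd := den_ne ha hz
  have hds : normSq (1 - (starRingEnd ℂ) a * z) ≠ 0 := by
    simpa [Complex.normSq_eq_zero] using hd
  have hns : normSq (mob a τ z) = normSq (z - a) / normSq (1 - (starRingEnd ℂ) a * z) := by
    simp only [mob, map_div₀, map_mul]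
    rw [Complex.normSq_eq_norm_sq τ, hτ]
    ring
  rw [hns]
  have key : normSq (1 - (starRingEnd ℂ) a * z) - normSq (z - a)
      = (1 - normSq a) * (1 - normSq z) := by
    simp only [Complex.normSq_apply, Complex.sub_re, Complex.sub_im, Complex.mul_re,
      Complex.mul_im, Complex.conj_re, Complex.conj_im, Complex.one_re, Complex.one_im]
    ring
  rw [sub_mul, one_mul, div_mul_cancel₀ _ hds]
  linarith [key]

lemma one_sub_normSq_pos {z : ℂ} (hz : ‖z‖ < 1) : 0 < 1 - normSq z := by
  rw [← Complex.sq_norm]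
  nlinarith [norm_nonneg z]

lemma mob_mem {a τ : ℂ} (ha : ‖a‖ < 1) (hτ : ‖τ‖ = 1) {z : ℂ}
    (hz : ‖z‖ < 1) : ‖mob a τ z‖ < 1 := by
  have h := normSq_mob ha hτ (z := z) hz
  have hd := den_ne ha hz
  have hds : 0 < normSq (1 - (starRingEnd ℂ) a * z) := Complex.normSq_pos.mpr hd
  have h1 : 0 < (1 - normSq a) * (1 - normSq z) :=
    mul_pos (one_sub_normSq_pos ha) (one_sub_normSq_pos hz)
  have h2 : 0 < 1 - normSq (mob a τ z) := by nlinarith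
  rw [← Complex.sq_norm] at h2
  nlinarith [norm_nonneg (mob a τ z)]

lemma conj_tau {τ : ℂ} (hτ : ‖τ‖ = 1) : (starRingEnd ℂ) τ = τ⁻¹ := by
  apply eq_inv_of_mul_eq_one_right
  rw [Complex.mul_conj]
  norm_cast
  rw [Complex.normSq_eq_norm_sq, hτ]; norm_num

lemma tau_ne {τ : ℂ} (hτ : ‖τ‖ = 1) : τ ≠ 0 := by
  intro h; rw [h] at hτ; simp at hτ

lemma one_sub_aconja_ne {a : ℂ} (ha : ‖a‖ < 1) :
    (1 : ℂ) - (starRingEnd ℂ) a * a ≠ 0 := by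
  have h : (1 : ℂ) - (starRingEnd ℂ) a * a = ((1 - normSq a : ℝ) : ℂ) := by
    rw [Complex.ofReal_sub, Complex.ofReal_one, ← Complex.mul_conj a]
    ring
  rw [h]
  exact_mod_cast (one_sub_normSq_pos ha).ne'

lemma conj_den {a w : ℂ} : (starRingEnd ℂ) (1 - (starRingEnd ℂ) a * w)
    = 1 - a * (starRingEnd ℂ) w := by simp

lemma mob_sub {a τ : ℂ} (ha : ‖a‖ < 1) {z w : ℂ}
    (hz : ‖z‖ < 1) (hw : ‖w‖ < 1) :
    mob a τ z - mob a τ w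
      = τ * (1 - (starRingEnd ℂ) a * a) * (z - w)
        / ((1 - (starRingEnd ℂ) a * z) * (1 - (starRingEnd ℂ) a * w)) := by
  have hdz := den_ne ha hz
  have hdw := den_ne ha hw
  have hdz' : 1 - z * (starRingEnd ℂ) a ≠ 0 := by rwa [mul_comm] at hdz
  have hdw' : 1 - w * (starRingEnd ℂ) a ≠ 0 := by rwa [mul_comm] at hdw
  simp only [mob]
  field_simp
  ring

lemma mob_one_sub {a τ : ℂ} (ha : ‖a‖ < 1) (hτ : ‖τ‖ = 1) {z w : ℂ}
    (hz : ‖z‖ < 1) (hw : ‖w‖ < 1) :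
    1 - (starRingEnd ℂ) (mob a τ w) * mob a τ z
      = (1 - (starRingEnd ℂ) a * a) * (1 - (starRingEnd ℂ) w * z)
        / ((1 - a * (starRingEnd ℂ) w) * (1 - (starRingEnd ℂ) a * z)) := by
  have hdz := den_ne ha hz
  have hdw := den_ne ha hw
  have hdwc : 1 - a * (starRingEnd ℂ) w ≠ 0 := by
    rw [← conj_den]; exact star_ne_zero.mpr hdw
  have hτ0 := tau_ne hτ
  have hdwc' : 1 - (starRingEnd ℂ) w * a ≠ 0 := by rwa [mul_comm] at hdwc
  have hcw : (starRingEnd ℂ) (mob a τ w)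
      = τ⁻¹ * ((starRingEnd ℂ) w - (starRingEnd ℂ) a) / (1 - a * (starRingEnd ℂ) w) := by
    simp only [mob, map_div₀, map_mul, map_sub, map_one, Complex.conj_conj, conj_tau hτ]
  rw [hcw]
  simp only [mob]
  field_simp
  ring

lemma mob_dist {a τ : ℂ} (ha : ‖a‖ < 1) (hτ : ‖τ‖ = 1) {z w : ℂ}
    (hz : ‖z‖ < 1) (hw : ‖w‖ < 1) :
    ‖(mob a τ z - mob a τ w) / (1 - (starRingEnd ℂ) (mob a τ w) * mob a τ z)‖
      = ‖(z - w) / (1 - (starRingEnd ℂ) w * z)‖ := by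
  have hdz := den_ne ha hz
  have hdw := den_ne ha hw
  have hzw := den_ne hw hz
  have h1a := one_sub_aconja_ne ha
  have habs : ‖1 - a * (starRingEnd ℂ) w‖
      = ‖1 - (starRingEnd ℂ) a * w‖ := by
    rw [← conj_den, Complex.norm_conj]
  rw [mob_sub ha hz hw, mob_one_sub ha hτ hz hw]
  rw [norm_div, norm_div, norm_div, norm_div, norm_mul, norm_mul, norm_mul, norm_mul, norm_mul, hτ,
    habs]
  have h1 : ‖1 - (starRingEnd ℂ) a * z‖ ≠ 0 := norm_ne_zero_iff.mpr hdz
  have h2 : ‖1 - (starRingEnd ℂ) a * w‖ ≠ 0 := norm_ne_zero_iff.mpr hdw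
  have h3 : ‖1 - (starRingEnd ℂ) w * z‖ ≠ 0 := norm_ne_zero_iff.mpr hzw
  have h4 : ‖1 - (starRingEnd ℂ) a * a‖ ≠ 0 := norm_ne_zero_iff.mpr h1a
  field_simp

lemma abs_inv_param {a τ : ℂ} (ha : ‖a‖ < 1) (hτ : ‖τ‖ = 1) :
    ‖-(τ * a)‖ < 1 := by
  rw [norm_neg, norm_mul, hτ, one_mul]; exact ha

lemma one_sub_a_conja_ne {a : ℂ} (ha : ‖a‖ < 1) :
    (1 : ℂ) - a * (starRingEnd ℂ) a ≠ 0 := by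
  have := one_sub_aconja_ne ha
  rwa [mul_comm] at this

lemma mob_inv_left {a τ : ℂ} (ha : ‖a‖ < 1) (hτ : ‖τ‖ = 1) {z : ℂ}
    (hz : ‖z‖ < 1) :
    mob (-(τ * a)) ((starRingEnd ℂ) τ) (mob a τ z) = z := by
  have hdz := den_ne ha hz
  have hdz' : 1 - z * (starRingEnd ℂ) a ≠ 0 := by rwa [mul_comm] at hdz
  have hτ0 := tau_ne hτ
  have h1a := one_sub_aconja_ne ha
  have h1 : 1 - (starRingEnd ℂ) (-(τ * a)) * mob a τ z
      = (1 - (starRingEnd ℂ) a * a) / (1 - (starRingEnd ℂ) a * z) := by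
    simp only [mob, map_neg, map_mul, conj_tau hτ]
    field_simp
    ring
  have h2 : mob a τ z - -(τ * a)
      = τ * z * (1 - (starRingEnd ℂ) a * a) / (1 - (starRingEnd ℂ) a * z) := by
    simp only [mob]
    field_simp
    ring
  conv_lhs => rw [mob]
  rw [h1, h2, conj_tau hτ]
  field_simp

lemma mob_inv_right {a τ : ℂ} (ha : ‖a‖ < 1) (hτ : ‖τ‖ = 1) {w : ℂ}
    (hw : ‖w‖ < 1) :
    mob a τ (mob (-(τ * a)) ((starRingEnd ℂ) τ) w) = w := by
  have hdN := den_ne (abs_inv_param ha hτ) hw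
  have hτ0 := tau_ne hτ
  have h1a := one_sub_aconja_ne ha
  have h1a' := one_sub_a_conja_ne ha
  have hX : (starRingEnd ℂ) (-(τ * a)) = -(τ⁻¹ * (starRingEnd ℂ) a) := by
    simp [conj_tau hτ]
  have hAW : (starRingEnd ℂ) a * w + τ ≠ 0 := by
    intro h
    apply hdN
    rw [hX]
    field_simp
    linear_combination h
  have hWA : w * (starRingEnd ℂ) a + τ ≠ 0 := by
    rw [mul_comm w]; exact hAW
  have hTA : τ + (starRingEnd ℂ) a * w ≠ 0 := by
    rw [add_comm]; exact hAW
  have hTW : τ + w * (starRingEnd ℂ) a ≠ 0 := by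
    rw [add_comm]; exact hWA
  have h1 : 1 - (starRingEnd ℂ) a * mob (-(τ * a)) ((starRingEnd ℂ) τ) w
      = (1 - (starRingEnd ℂ) a * a) / (1 - (starRingEnd ℂ) (-(τ * a)) * w) := by
    simp only [mob, hX, conj_tau hτ]
    field_simp [hAW, hWA, hTA, hTW]
    ring
  have h2 : mob (-(τ * a)) ((starRingEnd ℂ) τ) w - a
      = τ⁻¹ * w * (1 - a * (starRingEnd ℂ) a) / (1 - (starRingEnd ℂ) (-(τ * a)) * w) := by
    simp only [mob, hX, conj_tau hτ]
    field_simp [hAW, hWA, hTA, hTW]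
    ring
  conv_lhs => rw [mob]
  rw [h1, h2]
  set d := 1 - (starRingEnd ℂ) (-(τ * a)) * w with hd
  field_simp

lemma measurable_mob (a τ : ℂ) : Measurable (mob a τ) := by
  unfold mob
  exact ((measurable_id.sub_const a).const_mul τ).div
    (measurable_const.sub (measurable_id.const_mul ((starRingEnd ℂ) a)))

lemma measurableSet_hypDisk (z₀ : ℂ) (R : ℝ) : MeasurableSet (hypDisk z₀ R) := by
  have h2 : Measurable fun z : ℂ =>
      ‖(z - z₀) / (1 - (starRingEnd ℂ) z₀ * z)‖ :=
    continuous_norm.measurable.comp ((measurable_id.sub_const z₀).div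
      (measurable_const.sub (measurable_id.const_mul ((starRingEnd ℂ) z₀))))
  rw [hypDisk, Set.setOf_and]
  exact (measurableSet_lt continuous_norm.measurable measurable_const).inter
    (measurableSet_lt h2 measurable_const)

lemma mob_image_hypDisk {a τ : ℂ} (ha : ‖a‖ < 1) (hτ : ‖τ‖ = 1)
    {z₀ : ℂ} (hz₀ : ‖z₀‖ < 1) (R : ℝ) :
    mob a τ '' hypDisk z₀ R = hypDisk (mob a τ z₀) R := by
  have habsconj : ‖(starRingEnd ℂ) τ‖ = 1 := by rw [Complex.norm_conj]; exact hτ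
  ext w
  constructor
  · rintro ⟨z, ⟨hz1, hz2⟩, rfl⟩
    exact ⟨mob_mem ha hτ hz1, by rwa [mob_dist ha hτ hz1 hz₀]⟩
  · rintro ⟨hw1, hw2⟩
    have hN : ‖mob (-(τ * a)) ((starRingEnd ℂ) τ) w‖ < 1 :=
      mob_mem (abs_inv_param ha hτ) habsconj hw1
    refine ⟨mob (-(τ * a)) ((starRingEnd ℂ) τ) w, ⟨hN, ?_⟩, mob_inv_right ha hτ hw1⟩
    have h := mob_dist ha hτ hN hz₀
    rw [mob_inv_right ha hτ hw1] at h
    rw [← h]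
    exact hw2

lemma mob_hasDerivAt {a τ : ℂ} {z : ℂ} (hz : 1 - (starRingEnd ℂ) a * z ≠ 0) :
    HasDerivAt (mob a τ)
      (τ * (1 - (starRingEnd ℂ) a * a) / (1 - (starRingEnd ℂ) a * z) ^ 2) z := by
  have h1 : HasDerivAt (fun y : ℂ => τ * (y - a)) τ z := by
    simpa using ((hasDerivAt_id z).sub_const a).const_mul τ
  have h2 : HasDerivAt (fun y : ℂ => 1 - (starRingEnd ℂ) a * y) (-((starRingEnd ℂ) a)) z := by
    simpa using ((hasDerivAt_id z).const_mul ((starRingEnd ℂ) a)).const_sub 1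
  refine (h1.div h2 hz : HasDerivAt (mob a τ) _ z).congr_deriv ?_
  ring

lemma det_clm_complex_mul (c : ℂ) :
    ((ContinuousLinearMap.smulRight (1 : ℂ →L[ℂ] ℂ) c).restrictScalars ℝ).det
      = Complex.normSq c := by
  have h : (((ContinuousLinearMap.smulRight (1 : ℂ →L[ℂ] ℂ) c).restrictScalars ℝ :
      ℂ →L[ℝ] ℂ) : ℂ →ₗ[ℝ] ℂ) = Algebra.lmul ℝ ℂ c := by
    ext z
    simp [mul_comm]
  rw [ContinuousLinearMap.det, h, ← Algebra.norm_apply, Algebra.norm_complex_apply]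

lemma density_identity {a τ : ℂ} (ha : ‖a‖ < 1) (hτ : ‖τ‖ = 1) {z : ℂ}
    (hz : ‖z‖ < 1) (c : ℂ)
    (hc : c = τ * (1 - (starRingEnd ℂ) a * a) / (1 - (starRingEnd ℂ) a * z) ^ 2) :
    ENNReal.ofReal
        (_root_.abs (((ContinuousLinearMap.smulRight (1 : ℂ →L[ℂ] ℂ) c).restrictScalars ℝ).det))
        * ENNReal.ofReal (((1 - ‖mob a τ z‖ ^ 2) ^ 2)⁻¹)
      = ENNReal.ofReal (((1 - ‖z‖ ^ 2) ^ 2)⁻¹) := by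
  subst hc
  rw [det_clm_complex_mul, _root_.abs_of_nonneg (normSq_nonneg _),
    ← ENNReal.ofReal_mul (normSq_nonneg _)]
  congr 1
  have hd := den_ne ha hz
  have hkey := normSq_mob ha hτ (z := z) hz
  have hds : 0 < normSq (1 - (starRingEnd ℂ) a * z) := Complex.normSq_pos.mpr hd
  have hp : 0 < 1 - normSq a := one_sub_normSq_pos ha
  have hq : 0 < 1 - normSq z := one_sub_normSq_pos hz
  have hnc : normSq (τ * (1 - (starRingEnd ℂ) a * a) / (1 - (starRingEnd ℂ) a * z) ^ 2)
      = (1 - normSq a) ^ 2 / normSq (1 - (starRingEnd ℂ) a * z) ^ 2 := by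
    rw [map_div₀, map_mul, map_pow]
    rw [Complex.normSq_eq_norm_sq τ, hτ]
    have h1 : (1 : ℂ) - (starRingEnd ℂ) a * a = ((1 - normSq a : ℝ) : ℂ) := by
      rw [Complex.ofReal_sub, Complex.ofReal_one, ← Complex.mul_conj a]
      ring
    rw [h1, Complex.normSq_ofReal]
    ring
  have hu : 1 - normSq (mob a τ z)
      = (1 - normSq a) * (1 - normSq z) / normSq (1 - (starRingEnd ℂ) a * z) := by
    field_simp
    linarith [hkey]
  rw [Complex.sq_norm, Complex.sq_norm, hnc, hu]
  field_simp

lemma mob_lintegral_eq {a τ : ℂ} (ha : ‖a‖ < 1) (hτ : ‖τ‖ = 1)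
    (μ ν : ℂ → ℝ) (hμ : Measurable μ) (hν : Measurable ν)
    {z₀ : ℂ} (hz₀ : ‖z₀‖ < 1) (R : ℝ) :
    ∫⁻ w in hypDisk (mob a τ z₀) R,
        ENNReal.ofReal |ν w - μ (mob (-(τ * a)) ((starRingEnd ℂ) τ) w)| ∂volH
      = ∫⁻ z in hypDisk z₀ R, ENNReal.ofReal |μ z - ν (mob a τ z)| ∂volH := by
  have hS : MeasurableSet (hypDisk z₀ R) := measurableSet_hypDisk z₀ R
  set f' : ℂ → (ℂ →L[ℝ] ℂ) := fun z =>
    (ContinuousLinearMap.smulRight (1 : ℂ →L[ℂ] ℂ)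
      (τ * (1 - (starRingEnd ℂ) a * a) / (1 - (starRingEnd ℂ) a * z) ^ 2)).restrictScalars ℝ
    with hf'def
  have hf' : ∀ z ∈ hypDisk z₀ R, HasFDerivWithinAt (mob a τ) (f' z) (hypDisk z₀ R) z :=
    fun z hz =>
      ((mob_hasDerivAt (den_ne ha hz.1)).hasFDerivAt.restrictScalars ℝ).hasFDerivWithinAt
  have hinj : Set.InjOn (mob a τ) (hypDisk z₀ R) := fun x hx y hy hxy => by
    have h := congrArg (mob (-(τ * a)) ((starRingEnd ℂ) τ)) hxy
    rwa [mob_inv_left ha hτ hx.1, mob_inv_left ha hτ hy.1] at h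
  have himg := mob_image_hypDisk ha hτ hz₀ R
  have hρ : Measurable fun z : ℂ => ENNReal.ofReal (((1 - ‖z‖ ^ 2) ^ 2)⁻¹) :=
    ((measurable_const.sub (continuous_norm.measurable.pow_const 2)).pow_const 2).inv.ennreal_ofReal
  have hg : Measurable fun w : ℂ =>
      ENNReal.ofReal |ν w - μ (mob (-(τ * a)) ((starRingEnd ℂ) τ) w)| :=
    ((hν.sub (hμ.comp (measurable_mob _ _))).abs).ennreal_ofReal
  have hg2 : Measurable fun z : ℂ => ENNReal.ofReal |μ z - ν (mob a τ z)| :=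
    ((hμ.sub (hν.comp (measurable_mob _ _))).abs).ennreal_ofReal
  rw [← himg, volH]
  rw [setLIntegral_withDensity_eq_setLIntegral_mul volume hρ hg
    (himg ▸ measurableSet_hypDisk (mob a τ z₀) R)]
  rw [setLIntegral_withDensity_eq_setLIntegral_mul volume hρ hg2 hS]
  rw [lintegral_image_eq_lintegral_abs_det_fderiv_mul volume hS hf' hinj]
  apply setLIntegral_congr_fun hS
  intro z hz
  have h1 : mob (-(τ * a)) ((starRingEnd ℂ) τ) (mob a τ z) = z := mob_inv_left ha hτ hz.1
  simp only [Pi.mul_apply, h1, hf'def]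
  rw [← mul_assoc]
  congr 1
  · exact density_identity ha hτ hz.1 _ rfl
  · rw [abs_sub_comm]

lemma dR_le_symm (μ ν : ℂ → ℝ) (hμ : Measurable μ) (hν : Measurable ν)
    (z₀ w₀ : ℂ) (hz₀ : z₀ ∈ unitDisk) (hw₀ : w₀ ∈ unitDisk) (R : ℝ) :
    dR R ν μ w₀ z₀ ≤ dR R μ ν z₀ w₀ := by
  have hz₀' : ‖z₀‖ < 1 := hz₀
  rw [dR, dR]
  refine le_iInf fun m => ?_
  obtain ⟨mf, ⟨⟨a, τ, ha, hτ, hmf⟩, hm0⟩⟩ := m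
  have hmob : mf = mob a τ := funext hmf
  have hw : mob a τ z₀ = w₀ := by rw [← hmob]; exact hm0
  have hIsD : IsDiskMobius (mob (-(τ * a)) ((starRingEnd ℂ) τ)) :=
    ⟨-(τ * a), (starRingEnd ℂ) τ, abs_inv_param ha hτ,
      by rw [Complex.norm_conj]; exact hτ, fun z => rfl⟩
  have hn0 : mob (-(τ * a)) ((starRingEnd ℂ) τ) w₀ = z₀ := by
    rw [← hw]; exact mob_inv_left ha hτ hz₀'
  refine iInf_le_of_le ⟨mob (-(τ * a)) ((starRingEnd ℂ) τ), hIsD, hn0⟩ ?_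
  simp only [hmob]
  rw [← hw]
  exact le_of_eq (mob_lintegral_eq ha hτ μ ν hμ hν hz₀' R)

theorem dR_symm (μ ν : ℂ → ℝ) (hμ : Measurable μ) (hν : Measurable ν)
    (z₀ w₀ : ℂ) (hz₀ : z₀ ∈ unitDisk) (hw₀ : w₀ ∈ unitDisk) (R : ℝ) (hR : 0 < R) :
    dR R μ ν z₀ w₀ = dR R ν μ w₀ z₀ := by
  exact le_antisymm (dR_le_symm ν μ hν hμ w₀ z₀ hw₀ hz₀ R)
    (dR_le_symm μ ν hμ hν z₀ w₀ hz₀ hw₀ R)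

end
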